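/- Let ℓ ≥ 1, let C be an ℓ×ℓ complex matrix with columns C₁, …, C_ℓ, and for each s ∈ {1,…,ℓ} and p ∈ {0,1,2} let γ_s^p ∈ ℂ. For z ∈ ℂ let N(z) be the ℓ×ℓ complex matrix whose s-th column is γ_s^0·C_s + γ_s^1·z·C_{s+1} + γ_s^2·z²·C_{s+2}, where the column indices s+1, s+2 are taken modulo ℓ (in {1,…,ℓ}). Then there exists v₁ ∈ ℂ, independent of z, such that for all z ∈ ℂ: det N(z) = det C · ( ∏_{s=1}^{ℓ} γ_s^0 + v₁·z^ℓ + (∏_{s=1}^{ℓ} γ_s^2)·z^{2ℓ} ). -/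

import Mathlib

open Polynomial Matrix

namespace Det13

open scoped Fin.NatCast Fin.CommRing

variable {ℓ : ℕ} [NeZero ℓ]

theorem coeff_comp_C_mul_X (p : ℂ[X]) (a : ℂ) (n : ℕ) :
    (p.comp (Polynomial.C a * X)).coeff n = a ^ n * p.coeff n := by
  induction p using Polynomial.induction_on' with
  | add p q hp hq => simp [add_comp, hp, hq, mul_add]
  | monomial k c =>
      simp only [monomial_comp, mul_pow, ← Polynomial.C_pow, ← mul_assoc, ← Polynomial.C_mul,
        coeff_C_mul, coeff_X_pow, coeff_monomial, mul_ite, mul_zero]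
      by_cases h : n = k
      · subst h; simp; ring
      · simp [h, Ne.symm h]

/-- polynomial version of the cyclic perturbation matrix -/
noncomputable def Mp (γ0 γ1 γ2 : Fin ℓ → ℂ) : Matrix (Fin ℓ) (Fin ℓ) ℂ[X] :=
  Matrix.of fun i s =>
    (if i = s then Polynomial.C (γ0 s) else 0)
    + (if i = s + 1 then Polynomial.C (γ1 s) * X else 0)
    + (if i = s + 2 then Polynomial.C (γ2 s) * X ^ 2 else 0)

/-- reversed polynomial version -/
noncomputable def Mp' (γ0 γ1 γ2 : Fin ℓ → ℂ) : Matrix (Fin ℓ) (Fin ℓ) ℂ[X] :=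
  Matrix.of fun i s =>
    (if i = s then Polynomial.C (γ0 s) * X ^ 2 else 0)
    + (if i = s + 1 then Polynomial.C (γ1 s) * X else 0)
    + (if i = s + 2 then Polynomial.C (γ2 s) else 0)

/-- complex version -/
def Mz (γ0 γ1 γ2 : Fin ℓ → ℂ) (z : ℂ) : Matrix (Fin ℓ) (Fin ℓ) ℂ :=
  Matrix.of fun i s =>
    (if i = s then γ0 s else 0)
    + (if i = s + 1 then γ1 s * z else 0)
    + (if i = s + 2 then γ2 s * z ^ 2 else 0)

/-- reversed complex version -/
def Mz' (γ0 γ1 γ2 : Fin ℓ → ℂ) (z : ℂ) : Matrix (Fin ℓ) (Fin ℓ) ℂ :=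
  Matrix.of fun i s =>
    (if i = s then γ0 s * z ^ 2 else 0)
    + (if i = s + 1 then γ1 s * z else 0)
    + (if i = s + 2 then γ2 s else 0)

theorem eval_det_Mp (γ0 γ1 γ2 : Fin ℓ → ℂ) (z : ℂ) :
    eval z (Mp γ0 γ1 γ2).det = (Mz γ0 γ1 γ2 z).det := by
  have h : (Mp γ0 γ1 γ2).map (eval z) = Mz γ0 γ1 γ2 z := by
    ext i s
    simp [Mp, Mz, apply_ite (eval z)]
  rw [show eval z (Mp γ0 γ1 γ2).det = (evalRingHom z) (Mp γ0 γ1 γ2).det from rfl,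
    RingHom.map_det]
  rw [RingHom.mapMatrix_apply]; exact congrArg _ h

theorem eval_det_Mp' (γ0 γ1 γ2 : Fin ℓ → ℂ) (z : ℂ) :
    eval z (Mp' γ0 γ1 γ2).det = (Mz' γ0 γ1 γ2 z).det := by
  have h : (Mp' γ0 γ1 γ2).map (eval z) = Mz' γ0 γ1 γ2 z := by
    ext i s
    simp [Mp', Mz', apply_ite (eval z)]
  rw [show eval z (Mp' γ0 γ1 γ2).det = (evalRingHom z) (Mp' γ0 γ1 γ2).det from rfl,
    RingHom.map_det]
  rw [RingHom.mapMatrix_apply]; exact congrArg _ h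

theorem pow_val_add {ω : ℂ} (hω : ω ^ ℓ = 1) (s t : Fin ℓ) :
    ω ^ ((s + t : Fin ℓ) : ℕ) = ω ^ (s : ℕ) * ω ^ (t : ℕ) := by
  rw [Fin.val_add, ← pow_eq_pow_mod _ hω, pow_add]

theorem pow_val_natCast {ω : ℂ} (hω : ω ^ ℓ = 1) (k : ℕ) :
    ω ^ (((k : Fin ℓ)) : ℕ) = ω ^ k := by
  rw [Fin.val_natCast, ← pow_eq_pow_mod _ hω]

theorem conj_entry (γ0 γ1 γ2 : Fin ℓ → ℂ) {ω : ℂ} (hω : ω ^ ℓ = 1) (hω0 : ω ≠ 0)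
    (z : ℂ) (i s : Fin ℓ) :
    ω ^ (i : ℕ) * Mz γ0 γ1 γ2 z i s * (ω⁻¹) ^ (s : ℕ)
      = Mz γ0 γ1 γ2 (ω * z) i s := by
  have h0 : ω ^ (i : ℕ) * (if i = s then γ0 s else 0) * (ω⁻¹) ^ (s : ℕ)
      = (if i = s then γ0 s else 0) := by
    split_ifs with h
    · subst h; rw [mul_right_comm, ← mul_pow, mul_inv_cancel₀ hω0, one_pow, one_mul]
    · ring
  have h1 : ω ^ (i : ℕ) * (if i = s + 1 then γ1 s * z else 0) * (ω⁻¹) ^ (s : ℕ)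
      = (if i = s + 1 then γ1 s * (ω * z) else 0) := by
    split_ifs with h
    · subst h
      rw [pow_val_add hω, show (1 : Fin ℓ) = ((1 : ℕ) : Fin ℓ) by simp,
        pow_val_natCast hω]
      have hh : ω ^ (s : ℕ) * ω⁻¹ ^ (s : ℕ) = 1 := by rw [← mul_pow, mul_inv_cancel₀ hω0, one_pow]
      field_simp; linear_combination (γ1 s * z) * hh
    · ring
  have h2 : ω ^ (i : ℕ) * (if i = s + 2 then γ2 s * z ^ 2 else 0) * (ω⁻¹) ^ (s : ℕ)
      = (if i = s + 2 then γ2 s * (ω * z) ^ 2 else 0) := by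
    split_ifs with h
    · subst h
      rw [pow_val_add hω, show (2 : Fin ℓ) = ((2 : ℕ) : Fin ℓ) by simp,
        pow_val_natCast hω]
      have hh : ω ^ (s : ℕ) * ω⁻¹ ^ (s : ℕ) = 1 := by rw [← mul_pow, mul_inv_cancel₀ hω0, one_pow]
      field_simp; linear_combination (γ2 s * z ^ 2) * hh
    · ring
  calc ω ^ (i : ℕ) * Mz γ0 γ1 γ2 z i s * (ω⁻¹) ^ (s : ℕ)
      = ω ^ (i : ℕ) * (if i = s then γ0 s else 0) * (ω⁻¹) ^ (s : ℕ)
        + ω ^ (i : ℕ) * (if i = s + 1 then γ1 s * z else 0) * (ω⁻¹) ^ (s : ℕ)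
        + ω ^ (i : ℕ) * (if i = s + 2 then γ2 s * z ^ 2 else 0) * (ω⁻¹) ^ (s : ℕ) := by
        simp only [Mz, Matrix.of_apply]; ring
    _ = Mz γ0 γ1 γ2 (ω * z) i s := by rw [h0, h1, h2]; rfl

theorem det_Mz_rot (γ0 γ1 γ2 : Fin ℓ → ℂ) {ω : ℂ} (hω : ω ^ ℓ = 1) (hω0 : ω ≠ 0) (z : ℂ) :
    (Mz γ0 γ1 γ2 (ω * z)).det = (Mz γ0 γ1 γ2 z).det := by
  set D : Matrix (Fin ℓ) (Fin ℓ) ℂ := Matrix.diagonal fun i => ω ^ (i : ℕ) with hD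
  set E : Matrix (Fin ℓ) (Fin ℓ) ℂ := Matrix.diagonal fun s => (ω⁻¹) ^ (s : ℕ) with hE
  have hM : Mz γ0 γ1 γ2 (ω * z) = D * Mz γ0 γ1 γ2 z * E := by
    ext i s
    rw [Matrix.mul_diagonal, Matrix.diagonal_mul]
    exact (conj_entry γ0 γ1 γ2 hω hω0 z i s).symm
  have hDE : D.det * E.det = 1 := by
    rw [hD, hE, Matrix.det_diagonal, Matrix.det_diagonal, ← Finset.prod_mul_distrib]
    refine Finset.prod_eq_one fun i _ => ?_
    rw [← mul_pow, mul_inv_cancel₀ hω0, one_pow]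
  rw [hM, Matrix.det_mul, Matrix.det_mul]
  calc D.det * (Mz γ0 γ1 γ2 z).det * E.det
      = D.det * E.det * (Mz γ0 γ1 γ2 z).det := by ring
    _ = (Mz γ0 γ1 γ2 z).det := by rw [hDE, one_mul]

theorem natDegree_entry_le (γ0 γ1 γ2 : Fin ℓ → ℂ) (i s : Fin ℓ) :
    (Mp γ0 γ1 γ2 i s).natDegree ≤ 2 := by
  simp only [Mp, Matrix.of_apply]
  refine (natDegree_add_le _ _).trans (max_le ((natDegree_add_le _ _).trans (max_le ?_ ?_)) ?_)
  · split_ifs <;> simp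
  · split_ifs
    · exact (natDegree_C_mul_le _ _).trans (by simp)
    · simp
  · split_ifs
    · exact (natDegree_C_mul_le _ _).trans (by simp)
    · simp

theorem natDegree_det_Mp_le (γ0 γ1 γ2 : Fin ℓ → ℂ) :
    (Mp γ0 γ1 γ2).det.natDegree ≤ 2 * ℓ := by
  rw [Matrix.det_apply']
  refine natDegree_sum_le_of_forall_le _ _ fun σ _ => ?_
  refine natDegree_mul_le.trans ?_
  have h1 : (Equiv.Perm.sign σ : ℂ[X]).natDegree = 0 := by
    rcases Int.units_eq_one_or (Equiv.Perm.sign σ) with h | h <;> simp [h]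
  rw [h1, zero_add]
  refine (natDegree_prod_le _ _).trans ?_
  calc ∑ i : Fin ℓ, (Mp γ0 γ1 γ2 (σ i) i).natDegree
      ≤ ∑ _i : Fin ℓ, 2 := Finset.sum_le_sum fun i _ => natDegree_entry_le γ0 γ1 γ2 (σ i) i
    _ = 2 * ℓ := by simp [Finset.sum_const, mul_comm]

theorem sign_addRight_neg_two :
    Equiv.Perm.sign (Equiv.addRight (-2 : Fin ℓ)) = 1 := by
  have h : (Equiv.addRight (-2 : Fin ℓ))
      = Equiv.addRight (-1 : Fin ℓ) * Equiv.addRight (-1 : Fin ℓ) := by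
    apply Equiv.ext
    intro x
    show x + (-2) = (x + (-1)) + (-1)
    ring
  rw [h, _root_.map_mul, Int.units_mul_self]

theorem det_Mz'_zero (γ0 γ1 γ2 : Fin ℓ → ℂ) :
    (Mz' γ0 γ1 γ2 0).det = ∏ s : Fin ℓ, γ2 s := by
  have h : Mz' γ0 γ1 γ2 0
      = (Equiv.addRight (-2 : Fin ℓ)).permMatrix ℂ * Matrix.diagonal γ2 := by
    rw [PEquiv.toMatrix_toPEquiv_mul]
    ext i s
    by_cases his : i = s + 2
    · subst his
      have h2 : s + 2 + (-2) = s := by ring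
      simp [Mz', Matrix.submatrix, Matrix.diagonal, h2]
    · have hns : ¬(i + (-2) = s) := fun hc => his (by rw [← hc]; ring)
      simp [Mz', Matrix.submatrix, Matrix.diagonal, his, hns]
  rw [h, Matrix.det_mul, Matrix.det_permutation, sign_addRight_neg_two,
    Matrix.det_diagonal]
  simp

theorem det_Mz_zero (γ0 γ1 γ2 : Fin ℓ → ℂ) :
    (Mz γ0 γ1 γ2 0).det = ∏ s : Fin ℓ, γ0 s := by
  have h : Mz γ0 γ1 γ2 0 = Matrix.diagonal γ0 := by
    ext i s
    by_cases his : i = s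
    · subst his; simp [Mz, Matrix.diagonal]
    · simp [Mz, Matrix.diagonal, his]
  rw [h, Matrix.det_diagonal]

theorem Mz'_eq_smul (γ0 γ1 γ2 : Fin ℓ → ℂ) {z : ℂ} (hz : z ≠ 0) :
    Mz' γ0 γ1 γ2 z = (z ^ 2) • Mz γ0 γ1 γ2 z⁻¹ := by
  ext i s
  show _ = z ^ 2 * Mz γ0 γ1 γ2 z⁻¹ i s
  have e0 : (if i = s then γ0 s * z ^ 2 else 0) = z ^ 2 * (if i = s then γ0 s else 0) := by
    split_ifs <;> ring
  have e1 : (if i = s + 1 then γ1 s * z else 0)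
      = z ^ 2 * (if i = s + 1 then γ1 s * z⁻¹ else 0) := by
    split_ifs with h
    · field_simp
    · ring
  have e2 : (if i = s + 2 then γ2 s else 0)
      = z ^ 2 * (if i = s + 2 then γ2 s * z⁻¹ ^ 2 else 0) := by
    split_ifs with h
    · field_simp
    · ring
  simp only [Mz, Mz', Matrix.of_apply, mul_add]
  rw [e0, e1, e2]

/-- The key structure theorem for `det (Mz z)`. -/
theorem det_Mz_eq (hℓ : 1 ≤ ℓ) (γ0 γ1 γ2 : Fin ℓ → ℂ) :
    ∃ v1 : ℂ, ∀ z : ℂ,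
      (Mz γ0 γ1 γ2 z).det
        = (∏ s : Fin ℓ, γ0 s) + v1 * z ^ ℓ + (∏ s : Fin ℓ, γ2 s) * z ^ (2 * ℓ) := by
  classical
  set P : ℂ[X] := (Mp γ0 γ1 γ2).det with hP
  obtain ⟨ω, hprim⟩ : ∃ ω : ℂ, IsPrimitiveRoot ω ℓ :=
    ⟨_, Complex.isPrimitiveRoot_exp ℓ (NeZero.ne ℓ)⟩
  have hω : ω ^ ℓ = 1 := hprim.pow_eq_one
  have hω0 : ω ≠ 0 := by
    intro h
    rw [h, zero_pow (NeZero.ne ℓ)] at hω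
    exact zero_ne_one hω
  -- rotation symmetry of P
  have hcomp : P.comp (Polynomial.C ω * X) = P := by
    apply Polynomial.funext
    intro z
    rw [eval_comp]
    simp only [eval_mul, eval_C, eval_X]
    rw [eval_det_Mp, eval_det_Mp, det_Mz_rot γ0 γ1 γ2 hω hω0]
  have hvanish : ∀ n : ℕ, ¬ (ℓ ∣ n) → P.coeff n = 0 := by
    intro n hn
    have h1 : ω ^ n * P.coeff n = P.coeff n := by
      rw [← coeff_comp_C_mul_X, hcomp]
    have h2 : (ω ^ n - 1) * P.coeff n = 0 := by rw [sub_mul, one_mul, h1, sub_self]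
    rcases mul_eq_zero.mp h2 with h | h
    · exact absurd ((hprim.pow_eq_one_iff_dvd n).mp (sub_eq_zero.mp h)) hn
    · exact h
  have hvanish' : ∀ n : ℕ, n ≠ 0 → n ≠ ℓ → n ≠ 2 * ℓ → P.coeff n = 0 := by
    intro n h0 h1 h2
    by_cases hle : n ≤ 2 * ℓ
    · refine hvanish n ?_
      rintro ⟨k, rfl⟩
      have hk : k ≤ 2 := Nat.le_of_mul_le_mul_left
        (le_trans hle (le_of_eq (mul_comm 2 ℓ))) (by omega)
      interval_cases k <;> omega
    · exact coeff_eq_zero_of_natDegree_lt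
        (lt_of_le_of_lt (natDegree_det_Mp_le γ0 γ1 γ2) (by omega))
  -- three-term evaluation
  have heval : ∀ z : ℂ, eval z P
      = P.coeff 0 + P.coeff ℓ * z ^ ℓ + P.coeff (2 * ℓ) * z ^ (2 * ℓ) := by
    intro z
    rw [Polynomial.eval_eq_sum_range' (lt_of_le_of_lt (natDegree_det_Mp_le γ0 γ1 γ2)
      (Nat.lt_succ_self _))]
    have hsub : ({0, ℓ, 2 * ℓ} : Finset ℕ) ⊆ Finset.range (2 * ℓ + 1) := by
      intro x hx
      simp only [Finset.mem_insert, Finset.mem_singleton] at hx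
      rcases hx with rfl | rfl | rfl <;> simp [Finset.mem_range] <;> omega
    rw [← Finset.sum_subset hsub (fun x _ hx => by
      simp only [Finset.mem_insert, Finset.mem_singleton, not_or] at hx
      rw [hvanish' x hx.1 hx.2.1 hx.2.2, zero_mul])]
    have h0 : (0 : ℕ) ∉ ({ℓ, 2 * ℓ} : Finset ℕ) := by
      simp only [Finset.mem_insert, Finset.mem_singleton]
      omega
    have h1 : ℓ ∉ ({2 * ℓ} : Finset ℕ) := by
      simp only [Finset.mem_singleton]
      omega
    rw [Finset.sum_insert h0, Finset.sum_insert h1, Finset.sum_singleton]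
    rw [← hP]
    ring
  -- identify extreme coefficients
  have hc0 : P.coeff 0 = ∏ s : Fin ℓ, γ0 s := by
    rw [Polynomial.coeff_zero_eq_eval_zero, eval_det_Mp, det_Mz_zero]
  have hc2 : P.coeff (2 * ℓ) = ∏ s : Fin ℓ, γ2 s := by
    set Q : ℂ[X] := Polynomial.C (P.coeff (2 * ℓ)) + Polynomial.C (P.coeff ℓ) * X ^ ℓ
      + Polynomial.C (P.coeff 0) * X ^ (2 * ℓ) with hQ
    have hPQ : (Mp' γ0 γ1 γ2).det = Q := by
      apply Polynomial.eq_of_infinite_eval_eq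
      apply Set.Infinite.mono (s := {z : ℂ | z ≠ 0})
      · intro z hz
        have hz' : z ≠ 0 := hz
        show eval z (Mp' γ0 γ1 γ2).det = eval z Q
        rw [eval_det_Mp', Mz'_eq_smul γ0 γ1 γ2 hz', Matrix.det_smul,
          ← eval_det_Mp, heval, hQ]
        simp only [eval_add, eval_mul, eval_C, eval_pow, eval_X, Fintype.card_fin]
        have hzl : z ^ ℓ * z⁻¹ ^ ℓ = 1 := by rw [← mul_pow, mul_inv_cancel₀ hz', one_pow]
        field_simp
        linear_combination (P.coeff ℓ * z ^ ℓ + P.coeff (2 * ℓ) * (z ^ ℓ * z⁻¹ ^ ℓ + 1)) * hzl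
      · have h := (Set.finite_singleton (0 : ℂ)).infinite_compl
        exact h
    have h0 : eval 0 (Mp' γ0 γ1 γ2).det = P.coeff (2 * ℓ) := by
      rw [hPQ, hQ]
      have hℓ0 : ℓ ≠ 0 := NeZero.ne ℓ
      simp [zero_pow hℓ0, zero_pow (show 2 * ℓ ≠ 0 by omega)]
    rw [← h0, eval_det_Mp', det_Mz'_zero]
  exact ⟨P.coeff ℓ, fun z => by rw [← eval_det_Mp, heval z, hc0, hc2]⟩

end Det13

/-- determinant of the matrix `N(z)` whose `s`-th column is
`γ_s^0·C_s + γ_s^1·z·C_{s+1} + γ_s^2·z²·C_{s+2}` (column indices cyclic mod `ℓ`):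
`det N(z) = det C·(∏ γ_s^0 + v₁·z^ℓ + (∏ γ_s^2)·z^{2ℓ})` for some constant `v₁`. -/
theorem det_cyclic_column_perturbation
    (ℓ : ℕ) (hℓ : 1 ≤ ℓ) [NeZero ℓ]
    (C : Matrix (Fin ℓ) (Fin ℓ) ℂ)
    (γ0 γ1 γ2 : Fin ℓ → ℂ) :
    ∃ v1 : ℂ, ∀ z : ℂ,
      (Matrix.of fun i s : Fin ℓ =>
          γ0 s * C i s + γ1 s * z * C i (s + 1) + γ2 s * z ^ 2 * C i (s + 2)).det
        = C.det * ((∏ s : Fin ℓ, γ0 s) + v1 * z ^ ℓ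
            + (∏ s : Fin ℓ, γ2 s) * z ^ (2 * ℓ)) := by
  obtain ⟨v1, hv1⟩ := Det13.det_Mz_eq hℓ γ0 γ1 γ2
  refine ⟨v1, fun z => ?_⟩
  have hfac : (Matrix.of fun i s : Fin ℓ =>
      γ0 s * C i s + γ1 s * z * C i (s + 1) + γ2 s * z ^ 2 * C i (s + 2))
      = C * Det13.Mz γ0 γ1 γ2 z := by
    ext i s
    rw [Matrix.mul_apply]
    simp only [Det13.Mz, Matrix.of_apply, mul_add, mul_ite, mul_zero, Finset.sum_add_distrib,
      Finset.sum_ite_eq', Finset.mem_univ, if_true]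
    ring
  rw [hfac, Matrix.det_mul, hv1 z]
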